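/- Let σ > 0, let A, B ∈ ℝ with A ≠ B, and let (α₁, α₂) ∈ ℝ² with (α₁, α₂) ≠ (0,0). Define C(m₁, m₂, v) = −inf_{λ∈[0,1]} log ∫_ℝ φ_{m₁,v}(x)^λ φ_{m₂,v}(x)^{1−λ} dx. Then C(α₁A + α₂B, α₁B + α₂A, (α₁² + α₂²)σ²) ≤ 2 · C(A, B, σ²), i.e., (α₁−α₂)²(A−B)² / (8(α₁²+α₂²)σ²) ≤ 2(A−B)²/(8σ²), with equality if and only if α₂ = −α₁. In particular, the mixed observation α₁X₁ + α₂X₂ with α₂ = −α₁ doubles the Chernoff information compared with a separate observation of X₁ or X₂. -/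

import Mathlib

open MeasureTheory Real Set

/-- The Gaussian density with mean `m` and variance `v`. -/
noncomputable def gpdf (m v x : ℝ) : ℝ :=
  (Real.sqrt (2 * Real.pi * v))⁻¹ * Real.exp (-(x - m) ^ 2 / (2 * v))

lemma gpdf_eq (m : ℝ) {v : ℝ} (hv : 0 < v) :
    gpdf m v = ProbabilityTheory.gaussianPDFReal m ⟨v, hv.le⟩ := by
  funext x
  simp [gpdf, ProbabilityTheory.gaussianPDFReal]
  rfl

lemma integral_gpdf (m : ℝ) {v : ℝ} (hv : 0 < v) : ∫ x : ℝ, gpdf m v x = 1 := by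
  rw [gpdf_eq m hv]
  exact ProbabilityTheory.integral_gaussianPDFReal_eq_one m
    (fun h => hv.ne' (congrArg NNReal.toReal h))

lemma key_integral (m₁ m₂ : ℝ) {v : ℝ} (hv : 0 < v) (lam : ℝ) :
    ∫ x : ℝ, gpdf m₁ v x ^ lam * gpdf m₂ v x ^ (1 - lam)
      = Real.exp (-(lam * (1 - lam) * (m₁ - m₂) ^ 2) / (2 * v)) := by
  set s : ℝ := (Real.sqrt (2 * Real.pi * v))⁻¹ with hs
  have hinv : 0 < s := by
    rw [hs]
    have : 0 < Real.sqrt (2 * Real.pi * v) := Real.sqrt_pos.2 (by positivity)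
    positivity
  have heq : ∀ x : ℝ, gpdf m₁ v x ^ lam * gpdf m₂ v x ^ (1 - lam)
      = Real.exp (-(lam * (1 - lam) * (m₁ - m₂) ^ 2) / (2 * v))
        * gpdf (lam * m₁ + (1 - lam) * m₂) v x := by
    intro x
    have ha : (-(x - m₁) ^ 2 / (2 * v)) * lam + (-(x - m₂) ^ 2 / (2 * v)) * (1 - lam)
        = (-(lam * (1 - lam) * (m₁ - m₂) ^ 2) / (2 * v))
          + (-(x - (lam * m₁ + (1 - lam) * m₂)) ^ 2 / (2 * v)) := by
      field_simp
      ring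
    unfold gpdf
    rw [← hs, Real.mul_rpow hinv.le (Real.exp_nonneg _),
      Real.mul_rpow hinv.le (Real.exp_nonneg _), ← Real.exp_mul, ← Real.exp_mul]
    have h1 : s ^ lam * Real.exp ((-(x - m₁) ^ 2 / (2 * v)) * lam)
        * (s ^ (1 - lam) * Real.exp ((-(x - m₂) ^ 2 / (2 * v)) * (1 - lam)))
        = s ^ (lam + (1 - lam))
          * Real.exp ((-(x - m₁) ^ 2 / (2 * v)) * lam
            + (-(x - m₂) ^ 2 / (2 * v)) * (1 - lam)) := by
      rw [Real.rpow_add hinv, Real.exp_add]; ring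
    rw [h1, show lam + (1 - lam) = 1 by ring, Real.rpow_one, ha, Real.exp_add]
    ring
  simp only [heq]
  rw [MeasureTheory.integral_const_mul, integral_gpdf _ hv, mul_one]

/-- The Chernoff information between N(m₁,v) and N(m₂,v). -/
noncomputable def chernoff (m₁ m₂ v : ℝ) : ℝ :=
  -(⨅ lam : Set.Icc (0 : ℝ) 1,
      Real.log (∫ x : ℝ, gpdf m₁ v x ^ (lam : ℝ) * gpdf m₂ v x ^ (1 - (lam : ℝ))))

lemma chernoff_eq (m₁ m₂ : ℝ) {v : ℝ} (hv : 0 < v) :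
    chernoff m₁ m₂ v = (m₁ - m₂) ^ 2 / (8 * v) := by
  have hlog : ∀ lam : Set.Icc (0 : ℝ) 1,
      Real.log (∫ x : ℝ, gpdf m₁ v x ^ (lam : ℝ) * gpdf m₂ v x ^ (1 - (lam : ℝ)))
        = -((lam : ℝ) * (1 - (lam : ℝ)) * (m₁ - m₂) ^ 2) / (2 * v) := by
    intro lam
    rw [key_integral m₁ m₂ hv, Real.log_exp]
  have hbound : ∀ lam : Set.Icc (0 : ℝ) 1,
      -((m₁ - m₂) ^ 2 / (8 * v))
        ≤ -((lam : ℝ) * (1 - (lam : ℝ)) * (m₁ - m₂) ^ 2) / (2 * v) := by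
    intro lam
    rw [neg_div, neg_le_neg_iff, div_le_div_iff₀ (by positivity) (by positivity)]
    have h4 : (lam : ℝ) * (1 - (lam : ℝ)) ≤ 1 / 4 := by nlinarith [sq_nonneg ((lam : ℝ) - 1/2)]
    nlinarith [mul_nonneg (mul_nonneg (by linarith : (0:ℝ) ≤ 1/4 - (lam : ℝ) * (1 - (lam : ℝ)))
      (sq_nonneg (m₁ - m₂))) hv.le]
  have hinf : (⨅ lam : Set.Icc (0 : ℝ) 1,
      Real.log (∫ x : ℝ, gpdf m₁ v x ^ (lam : ℝ) * gpdf m₂ v x ^ (1 - (lam : ℝ))))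
        = -((m₁ - m₂) ^ 2 / (8 * v)) := by
    apply le_antisymm
    · have h := ciInf_le (f := fun lam : Set.Icc (0 : ℝ) 1 =>
        Real.log (∫ x : ℝ, gpdf m₁ v x ^ (lam : ℝ) * gpdf m₂ v x ^ (1 - (lam : ℝ))))
        (⟨-((m₁ - m₂) ^ 2 / (8 * v)), fun y hy => by
          obtain ⟨lam, rfl⟩ := hy
          have := hbound lam
          rw [← hlog lam] at this
          exact this⟩)
        ⟨1/2, by norm_num, by norm_num⟩
      refine h.trans_eq ?_
      show Real.log _ = _
      rw [hlog ⟨1/2, by norm_num, by norm_num⟩]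
      push_cast
      rw [neg_div]
      congr 1
      field_simp
      ring
    · refine le_ciInf fun lam => ?_
      have := hbound lam
      rw [← hlog lam] at this
      exact this
  unfold chernoff
  rw [hinf, neg_neg]

theorem stmt6 (σ A B α₁ α₂ : ℝ) (hσ : 0 < σ) (hAB : A ≠ B)
    (hα : (α₁, α₂) ≠ ((0 : ℝ), (0 : ℝ))) :
    chernoff (α₁ * A + α₂ * B) (α₁ * B + α₂ * A) ((α₁ ^ 2 + α₂ ^ 2) * σ ^ 2)
        ≤ 2 * chernoff A B (σ ^ 2)
    ∧ (α₁ - α₂) ^ 2 * (A - B) ^ 2 / (8 * ((α₁ ^ 2 + α₂ ^ 2) * σ ^ 2))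
        ≤ 2 * ((A - B) ^ 2 / (8 * σ ^ 2))
    ∧ (chernoff (α₁ * A + α₂ * B) (α₁ * B + α₂ * A) ((α₁ ^ 2 + α₂ ^ 2) * σ ^ 2)
          = 2 * chernoff A B (σ ^ 2) ↔ α₂ = -α₁) := by
  have hαs : 0 < α₁ ^ 2 + α₂ ^ 2 := by
    rcases eq_or_ne α₁ 0 with h1 | h1
    · rcases eq_or_ne α₂ 0 with h2 | h2
      · exact absurd (by rw [h1, h2]) hα
      · positivity
    · positivity
  have hv : 0 < (α₁ ^ 2 + α₂ ^ 2) * σ ^ 2 := by positivity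
  have h1 := chernoff_eq (α₁ * A + α₂ * B) (α₁ * B + α₂ * A) hv
  have h2 := chernoff_eq A B (show (0:ℝ) < σ ^ 2 by positivity)
  have hd : (α₁ * A + α₂ * B) - (α₁ * B + α₂ * A) = (α₁ - α₂) * (A - B) := by ring
  rw [h1, h2, hd, mul_pow]
  have hABs : 0 < (A - B) ^ 2 := by
    have : A - B ≠ 0 := sub_ne_zero.2 hAB
    positivity
  have hineq : (α₁ - α₂) ^ 2 * (A - B) ^ 2 / (8 * ((α₁ ^ 2 + α₂ ^ 2) * σ ^ 2))
      ≤ 2 * ((A - B) ^ 2 / (8 * σ ^ 2)) := by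
    rw [div_le_iff₀ (by positivity)]
    have h : (α₁ - α₂) ^ 2 ≤ 2 * (α₁ ^ 2 + α₂ ^ 2) := by nlinarith [sq_nonneg (α₁ + α₂)]
    calc (α₁ - α₂) ^ 2 * (A - B) ^ 2 ≤ 2 * (α₁ ^ 2 + α₂ ^ 2) * (A - B) ^ 2 := by nlinarith
    _ = 2 * ((A - B) ^ 2 / (8 * σ ^ 2)) * (8 * ((α₁ ^ 2 + α₂ ^ 2) * σ ^ 2)) := by
        field_simp
  refine ⟨hineq, hineq, ?_⟩
  constructor
  · intro h
    rw [div_eq_iff (by positivity)] at h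
    field_simp at h
    have h' : ((α₁ + α₂) ^ 2) * ((A - B) ^ 2 * σ ^ 2) = 0 := by rw [show (α₁ + α₂) ^ 2 = 0 by nlinarith [h], zero_mul]
    have hσ2 : (A - B) ^ 2 * σ ^ 2 ≠ 0 := by positivity
    have : (α₁ + α₂) ^ 2 = 0 := by
      rcases mul_eq_zero.1 h' with h'' | h''
      · exact h''
      · exact absurd h'' hσ2
    have := pow_eq_zero_iff (n := 2) (by norm_num) |>.1 this
    linarith
  · rintro rfl
    rw [div_eq_iff (by positivity)]
    field_simp
    ring
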